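/- Let N_θ(x) = v₁σ(w₁·x) + v₂σ(w₂·x) be a bias-less 2-layer ReLU network of width n = 2 on ℝ^d. Suppose there is a dataset (x_i, y_i)_{i=1}^m with y_i ∈ {−1,+1} such that y_i N_θ(x_i) > 0 for all i ∈ [m], and y_i = −1 for at least one i. Then Pr_{x~Unif(S^{d−1})}[N_θ(x) ≤ 0] ≥ 1/2. -/

import Mathlib

open MeasureTheory

/-- ReLU. -/
noncomputable def relu (z : ℝ) : ℝ := max z 0

/-- Bias-less 2-layer ReLU network on ℝ^d. -/
noncomputable def netNB {d n : ℕ} (v : Fin n → ℝ) (w : Fin n → EuclideanSpace ℝ (Fin d))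
    (x : EuclideanSpace ℝ (Fin d)) : ℝ :=
  ∑ j, v j * relu (inner ℝ (w j) x : ℝ)

/-- Uniform probability measure on the unit sphere S^{d-1} ⊂ ℝ^d. -/
noncomputable def unifSphere (d : ℕ) : Measure (EuclideanSpace ℝ (Fin d)) :=
  (μH[(d : ℝ) - 1] (Metric.sphere (0 : EuclideanSpace ℝ (Fin d)) 1))⁻¹ •
    (μH[(d : ℝ) - 1]).restrict (Metric.sphere 0 1)

open Metric
open scoped ENNReal NNReal

lemma coord_le_norm {n : ℕ} (x : EuclideanSpace ℝ (Fin n)) (i : Fin n) : |x i| ≤ ‖x‖ := by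
  have h : |x i| ^ 2 ≤ ∑ j, ‖x j‖ ^ 2 := by
    have := Finset.single_le_sum (f := fun j => ‖x j‖^2) (fun j _ => sq_nonneg _) (Finset.mem_univ i)
    simpa using this
  rw [EuclideanSpace.norm_eq, show |x i| = Real.sqrt (|x i|^2) by rw [Real.sqrt_sq (abs_nonneg _)]]
  exact Real.sqrt_le_sqrt h

lemma lipschitzOnWith_radial {E : Type*} [NormedAddCommGroup E] [NormedSpace ℝ E] :
    LipschitzOnWith 2 (fun x : E => ‖x‖⁻¹ • x) {x | 1 ≤ ‖x‖} := by
  rw [lipschitzOnWith_iff_dist_le_mul]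
  intro x hx y hy
  simp only [Set.mem_setOf_eq] at hx hy
  have hx0 : (0:ℝ) < ‖x‖ := lt_of_lt_of_le one_pos hx
  have hy0 : (0:ℝ) < ‖y‖ := lt_of_lt_of_le one_pos hy
  have hinv : ‖x‖⁻¹ ≤ 1 := by
    rw [inv_le_one_iff₀]; right; exact hx
  rw [dist_eq_norm, dist_eq_norm]
  have key : ‖x‖⁻¹ • x - ‖y‖⁻¹ • y = ‖x‖⁻¹ • (x - y) + (‖x‖⁻¹ - ‖y‖⁻¹) • y := by
    rw [smul_sub, sub_smul]; abel
  rw [key]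
  have h1 : ‖‖x‖⁻¹ • (x - y)‖ ≤ ‖x - y‖ := by
    rw [norm_smul, Real.norm_eq_abs, abs_of_pos (inv_pos.2 hx0)]
    nlinarith [norm_nonneg (x - y)]
  have h2 : ‖(‖x‖⁻¹ - ‖y‖⁻¹) • y‖ ≤ ‖x - y‖ := by
    rw [norm_smul, Real.norm_eq_abs]
    have habs : |‖x‖ - ‖y‖| ≤ ‖x - y‖ := abs_norm_sub_norm_le x y
    have heq : |‖x‖⁻¹ - ‖y‖⁻¹| = |‖y‖ - ‖x‖| / (‖x‖ * ‖y‖) := by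
      rw [inv_sub_inv hx0.ne' hy0.ne', abs_div, abs_mul, abs_of_pos hx0, abs_of_pos hy0]
    rw [heq, abs_sub_comm, div_mul_eq_mul_div, div_le_iff₀ (by positivity)]
    calc |‖x‖ - ‖y‖| * ‖y‖ ≤ ‖x - y‖ * ‖y‖ :=
          mul_le_mul_of_nonneg_right habs (norm_nonneg y)
      _ ≤ ‖x - y‖ * (‖x‖ * ‖y‖) :=
          mul_le_mul_of_nonneg_left (le_mul_of_one_le_left (norm_nonneg y) hx) (norm_nonneg (x - y))
  calc ‖‖x‖⁻¹ • (x - y) + (‖x‖⁻¹ - ‖y‖⁻¹) • y‖ ≤ ‖‖x‖⁻¹ • (x - y)‖ + ‖(‖x‖⁻¹ - ‖y‖⁻¹) • y‖ :=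
        norm_add_le _ _
    _ ≤ ↑(2:NNReal) * ‖x - y‖ := by push_cast; linarith

lemma isometry_insertNth {k : ℕ} (j : Fin (k+1)) (a : ℝ) :
    Isometry (fun u : Fin k → ℝ => (Fin.insertNth j a u : Fin (k+1) → ℝ)) := by
  apply Isometry.of_dist_eq
  intro u v
  apply le_antisymm
  · apply dist_pi_le_iff dist_nonneg |>.2
    intro i
    refine Fin.succAboveCases j ?_ ?_ i
    · simpa using (dist_nonneg : 0 ≤ dist u v)
    · intro i'; simpa using dist_le_pi_dist u v i'
  · apply dist_pi_le_iff dist_nonneg |>.2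
    intro i
    have := dist_le_pi_dist (Fin.insertNth j a u : Fin (k+1) → ℝ)
      (Fin.insertNth j a v : Fin (k+1) → ℝ) (j.succAbove i)
    simpa using this

lemma sphere_haus_lt_top (k : ℕ) :
    μH[(k:ℝ)] (sphere (0 : EuclideanSpace ℝ (Fin (k+1))) 1) < ⊤ := by
  classical
  have hk0 : (0:ℝ) ≤ (k:ℝ) := Nat.cast_nonneg k
  have hsymm : LipschitzWith ((Fintype.card (Fin (k+1)) : ℝ≥0) ^ ((1/(2:ℝ≥0∞))).toReal)
      ((WithLp.equiv 2 (Fin (k+1) → ℝ)).symm) :=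
    LipschitzWith.of_dist_le_mul fun u v => by
      have h := (PiLp.antilipschitzWith_ofLp 2 (fun _ : Fin (k+1) => ℝ)).le_mul_dist
        ((WithLp.equiv 2 _).symm u) ((WithLp.equiv 2 _).symm v)
      exact h
  let piece : Fin (k+1) → Bool → Set (EuclideanSpace ℝ (Fin (k+1))) := fun j b =>
    (fun x : EuclideanSpace ℝ (Fin (k+1)) => ‖x‖⁻¹ • x) '' ((WithLp.equiv 2 (Fin (k+1) → ℝ)).symm ''
      ((fun u : Fin k → ℝ => (Fin.insertNth j (cond b 1 (-1)) u : Fin (k+1) → ℝ)) ''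
        closedBall 0 1))
  have hcover : sphere (0 : EuclideanSpace ℝ (Fin (k+1))) 1 ⊆ ⋃ (j : Fin (k+1)) (b : Bool), piece j b := by
    intro x hx
    rw [mem_sphere_zero_iff_norm] at hx
    obtain ⟨j, -, hj⟩ := Finset.exists_max_image Finset.univ (fun i => |x i|)
      ⟨0, Finset.mem_univ 0⟩
    have hj' : ∀ i, |x i| ≤ |x j| := fun i => hj i (Finset.mem_univ i)
    set t := |x j| with ht
    have htpos : 0 < t := by
      by_contra hcon
      push_neg at hcon
      have hall : ∀ i, x i = 0 := fun i =>
        abs_eq_zero.1 (le_antisymm (le_trans (hj' i) hcon) (abs_nonneg _))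
      have hz : ‖x‖ = 0 := by
        rw [EuclideanSpace.norm_eq]; simp [hall]
      rw [hx] at hz; exact one_ne_zero hz
    set b : Bool := decide (0 ≤ x j) with hb
    set u : Fin k → ℝ := fun i => t⁻¹ * x (j.succAbove i) with hu
    refine Set.mem_iUnion.2 ⟨j, Set.mem_iUnion.2 ⟨b, ?_⟩⟩
    have hmem : u ∈ closedBall (0 : Fin k → ℝ) 1 := by
      rw [mem_closedBall_zero_iff]
      refine (pi_norm_le_iff_of_nonneg zero_le_one).2 fun i => ?_
      rw [hu]
      simp only [Real.norm_eq_abs, abs_mul, abs_inv, abs_abs]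
      rw [abs_of_pos htpos]
      calc t⁻¹ * |x (j.succAbove i)| ≤ t⁻¹ * t := by
            apply mul_le_mul_of_nonneg_left (hj' _) (inv_nonneg.2 htpos.le)
        _ = 1 := inv_mul_cancel₀ htpos.ne'
    have heq : (WithLp.equiv 2 (Fin (k+1) → ℝ)).symm (Fin.insertNth j (cond b 1 (-1)) u) = t⁻¹ • x := by
      apply (WithLp.equiv 2 (Fin (k+1) → ℝ)).symm_apply_eq.2
      change _ = t⁻¹ • WithLp.ofLp x
      funext i
      refine Fin.succAboveCases j ?_ ?_ i
      · simp only [Fin.insertNth_apply_same]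
        rw [Pi.smul_apply]
        by_cases h0 : 0 ≤ x j
        · have heqt : t = x j := abs_of_nonneg h0
          simp only [hb, h0, decide_true, cond_true, Pi.smul_apply, smul_eq_mul, heqt]
          exact (inv_mul_cancel₀ (by rw [← heqt]; exact htpos.ne')).symm
        · have heqt : t = -(x j) := abs_of_neg (not_le.1 h0)
          have hne : x j ≠ 0 := ne_of_lt (not_le.1 h0)
          simp only [hb, h0, decide_false, cond_false, Pi.smul_apply, smul_eq_mul, heqt]
          rw [← div_eq_inv_mul, div_neg, div_self hne]
      · intro i'
        simp [Fin.insertNth_apply_succAbove, hu, smul_eq_mul]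
    refine ⟨t⁻¹ • x, ⟨_, ⟨u, hmem, rfl⟩, heq⟩, ?_⟩
    have hnorm : ‖t⁻¹ • x‖ = t⁻¹ := by
      rw [norm_smul, Real.norm_eq_abs, abs_of_pos (inv_pos.2 htpos), hx, mul_one]
    show ‖t⁻¹ • x‖⁻¹ • (t⁻¹ • x) = x
    rw [hnorm, inv_inv, smul_smul, mul_inv_cancel₀ htpos.ne', one_smul]
  refine lt_of_le_of_lt (measure_mono hcover) ?_
  refine lt_of_le_of_lt (measure_iUnion_le _) ?_
  rw [tsum_fintype]
  refine ENNReal.sum_lt_top.2 fun j _ => ?_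
  refine lt_of_le_of_lt (measure_iUnion_le _) ?_
  rw [tsum_fintype]
  refine ENNReal.sum_lt_top.2 fun b _ => ?_
  -- single piece
  have hsub : (WithLp.equiv 2 (Fin (k+1) → ℝ)).symm ''
      ((fun u : Fin k → ℝ => (Fin.insertNth j (cond b 1 (-1)) u : Fin (k+1) → ℝ)) ''
        closedBall 0 1) ⊆ {x : EuclideanSpace ℝ (Fin (k+1)) | 1 ≤ ‖x‖} := by
    rintro z ⟨g, ⟨u, -, rfl⟩, rfl⟩
    have h1 : |((WithLp.equiv 2 (Fin (k+1) → ℝ)).symm (Fin.insertNth j (cond b 1 (-1)) u)) j| = 1 := by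
      rw [WithLp.equiv_symm_apply, WithLp.ofLp_toLp]
      simp only [Fin.insertNth_apply_same]
      cases b <;> simp
    calc (1:ℝ) = _ := h1.symm
      _ ≤ _ := coord_le_norm _ j
  have e1 := (lipschitzOnWith_radial.mono hsub).hausdorffMeasure_image_le (d := (k:ℝ)) hk0
  have e2 := hsymm.hausdorffMeasure_image_le (d := (k:ℝ)) hk0
    ((fun u : Fin k → ℝ => (Fin.insertNth j (cond b 1 (-1)) u : Fin (k+1) → ℝ)) '' closedBall 0 1)
  have e3 := (isometry_insertNth j (cond b 1 (-1))).hausdorffMeasure_image (Or.inl hk0)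
    (closedBall (0 : Fin k → ℝ) 1)
  have e4 : μH[(k:ℝ)] (closedBall (0 : Fin k → ℝ) 1) < ⊤ := by
    have hvol : μH[(k:ℝ)] = (volume : Measure (Fin k → ℝ)) := by
      rw [← hausdorffMeasure_pi_real (ι := Fin k)]
      norm_num
    rw [hvol]
    exact measure_closedBall_lt_top
  refine lt_of_le_of_lt e1 (lt_of_le_of_lt (mul_le_mul_right e2 _) ?_)
  rw [e3]
  refine ENNReal.mul_lt_top ?_ (ENNReal.mul_lt_top ?_ e4)
  · exact ENNReal.rpow_lt_top_of_nonneg hk0 ENNReal.coe_ne_top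
  · exact ENNReal.rpow_lt_top_of_nonneg hk0 ENNReal.coe_ne_top

lemma sphere_haus_pos (k : ℕ) :
    0 < μH[(k:ℝ)] (sphere (0 : EuclideanSpace ℝ (Fin (k+1))) 1) := by
  have hk0 : (0:ℝ) ≤ (k:ℝ) := Nat.cast_nonneg k
  set r : ℝ := (Real.sqrt (k+1))⁻¹ with hr
  have hr0 : 0 < r := by positivity
  -- projection to first k coordinates
  set π : EuclideanSpace ℝ (Fin (k+1)) → (Fin k → ℝ) :=
    fun x i => x i.castSucc with hπ
  have hlip : LipschitzWith 1 π := by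
    apply LipschitzWith.of_dist_le_mul
    intro x y
    rw [NNReal.coe_one, one_mul]
    refine (dist_pi_le_iff dist_nonneg).2 fun i => ?_
    have h := coord_le_norm (x - y) i.castSucc
    rw [Real.dist_eq]
    have hc : (x - y) i.castSucc = x i.castSucc - y i.castSucc := by
      simp
    rw [hc] at h
    rw [show dist x y = ‖x - y‖ from dist_eq_norm x y]
    exact h
  have hsub : closedBall (0 : Fin k → ℝ) r ⊆ π '' sphere (0 : EuclideanSpace ℝ (Fin (k+1))) 1 := by
    intro u hu
    rw [mem_closedBall_zero_iff] at hu
    have hui : ∀ i, |u i| ≤ r := fun i => by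
      calc |u i| = ‖u i‖ := rfl
        _ ≤ ‖u‖ := norm_le_pi_norm u i
        _ ≤ r := hu
    have hsum : ∑ i, (u i)^2 ≤ 1 := by
      have h1 : ∀ i ∈ Finset.univ, (u i)^2 ≤ r^2 := fun i _ => by
        rw [← sq_abs]
        exact pow_le_pow_left₀ (abs_nonneg _) (hui i) 2
      calc ∑ i, (u i)^2 ≤ ∑ _i : Fin k, r^2 := Finset.sum_le_sum h1
        _ = k * r^2 := by rw [Finset.sum_const]; simp [mul_comm]
        _ ≤ (k+1) * r^2 := by nlinarith [sq_nonneg r]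
        _ = 1 := by
            rw [hr]
            rw [inv_pow, Real.sq_sqrt (by positivity)]
            field_simp
    set t : ℝ := Real.sqrt (1 - ∑ i, (u i)^2) with htdef
    have ht2 : t^2 = 1 - ∑ i, (u i)^2 := Real.sq_sqrt (by linarith)
    set x : EuclideanSpace ℝ (Fin (k+1)) :=
      (WithLp.equiv 2 (Fin (k+1) → ℝ)).symm (Fin.insertNth (Fin.last k) t u) with hx
    refine ⟨x, ?_, ?_⟩
    · rw [mem_sphere_zero_iff_norm, EuclideanSpace.norm_eq]
      have : ∑ i, ‖x i‖^2 = 1 := by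
        have hxi : ∀ i, x i = (Fin.insertNth (Fin.last k) t u : Fin (k+1) → ℝ) i := fun i => by
          rw [hx, WithLp.equiv_symm_apply, WithLp.ofLp_toLp]
        rw [Fin.sum_univ_succAbove (fun i => ‖x i‖^2) (Fin.last k)]
        have h1 : ‖x (Fin.last k)‖^2 = t^2 := by
          rw [hxi, Fin.insertNth_apply_same]; simp [sq_abs]
        have h2 : ∀ i : Fin k, ‖x ((Fin.last k).succAbove i)‖^2 = (u i)^2 := fun i => by
          rw [hxi, Fin.insertNth_apply_succAbove]; simp [sq_abs]
        rw [h1]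
        rw [Finset.sum_congr rfl (fun i _ => h2 i)]
        rw [ht2]; ring
      rw [this, Real.sqrt_one]
    · funext i
      rw [hπ]
      simp only []
      rw [hx, WithLp.equiv_symm_apply, WithLp.ofLp_toLp]
      have : (Fin.last k).succAbove i = i.castSucc := by
        rw [Fin.succAbove_last]
      rw [← this, Fin.insertNth_apply_succAbove]
  have key : volume (closedBall (0 : Fin k → ℝ) r) ≤ μH[(k:ℝ)] (sphere (0 : EuclideanSpace ℝ (Fin (k+1))) 1) := by
    have hvol : (volume : Measure (Fin k → ℝ)) = μH[(k:ℝ)] := by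
      rw [← hausdorffMeasure_pi_real (ι := Fin k)]
      norm_num
    rw [hvol]
    calc μH[(k:ℝ)] (closedBall (0 : Fin k → ℝ) r)
        ≤ μH[(k:ℝ)] (π '' sphere (0 : EuclideanSpace ℝ (Fin (k+1))) 1) := measure_mono hsub
      _ ≤ μH[(k:ℝ)] (sphere (0 : EuclideanSpace ℝ (Fin (k+1))) 1) := by
          simpa using hlip.hausdorffMeasure_image_le (d := (k:ℝ)) hk0
            (sphere (0 : EuclideanSpace ℝ (Fin (k+1))) 1)
  refine lt_of_lt_of_le ?_ key
  exact measure_closedBall_pos volume 0 hr0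

lemma haus_sphere_ne (d : ℕ) (hd : 1 ≤ d) :
    μH[(d:ℝ)-1] (sphere (0 : EuclideanSpace ℝ (Fin d)) 1) ≠ 0 ∧
    μH[(d:ℝ)-1] (sphere (0 : EuclideanSpace ℝ (Fin d)) 1) ≠ ⊤ := by
  obtain ⟨k, rfl⟩ : ∃ k, d = k + 1 := ⟨d - 1, by omega⟩
  have hcast : ((k+1 : ℕ):ℝ) - 1 = (k:ℝ) := by push_cast; ring
  rw [hcast]
  exact ⟨(sphere_haus_pos k).ne', (sphere_haus_lt_top k).ne⟩

lemma neg_invariance {d : ℕ} (a : EuclideanSpace ℝ (Fin d)) :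
    (μH[(d:ℝ)-1]).restrict (sphere (0 : EuclideanSpace ℝ (Fin d)) 1) {z | (inner ℝ a z : ℝ) < 0} =
    (μH[(d:ℝ)-1]).restrict (sphere (0 : EuclideanSpace ℝ (Fin d)) 1) {z | (0:ℝ) < inner ℝ a z} := by
  have hinner : Continuous (fun z : EuclideanSpace ℝ (Fin d) => (inner ℝ a z : ℝ)) :=
    continuous_const.inner continuous_id
  have hA : MeasurableSet {z : EuclideanSpace ℝ (Fin d) | (0:ℝ) < inner ℝ a z} :=
    (isOpen_lt continuous_const hinner).measurableSet
  have hB : MeasurableSet {z : EuclideanSpace ℝ (Fin d) | (inner ℝ a z : ℝ) < 0} :=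
    (isOpen_lt hinner continuous_const).measurableSet
  rw [Measure.restrict_apply hB, Measure.restrict_apply hA]
  have himg : {z : EuclideanSpace ℝ (Fin d) | (inner ℝ a z : ℝ) < 0} ∩ sphere 0 1 =
      (fun z : EuclideanSpace ℝ (Fin d) => -z) ''
        ({z | (0:ℝ) < inner ℝ a z} ∩ sphere 0 1) := by
    ext z
    constructor
    · rintro ⟨hz1, hz2⟩
      refine ⟨-z, ⟨?_, ?_⟩, neg_neg z⟩
      · simp only [Set.mem_setOf_eq, inner_neg_right]
        simpa using hz1
      · simpa [mem_sphere_zero_iff_norm] using (mem_sphere_zero_iff_norm.1 hz2)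
    · rintro ⟨y, ⟨hy1, hy2⟩, rfl⟩
      refine ⟨?_, ?_⟩
      · simp only [Set.mem_setOf_eq, inner_neg_right]
        simpa using hy1
      · simpa [mem_sphere_zero_iff_norm] using (mem_sphere_zero_iff_norm.1 hy2)
  rw [himg]
  have hiso : Isometry (fun z : EuclideanSpace ℝ (Fin d) => -z) :=
    Isometry.of_dist_eq fun z w => dist_neg_neg z w
  exact hiso.hausdorffMeasure_image (Or.inr fun z => ⟨-z, neg_neg z⟩) _

lemma one_aux {d : ℕ} (hd : 1 ≤ d) (f : EuclideanSpace ℝ (Fin d) → ℝ)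
    (hle : ∀ z, f z ≤ 0) :
    1 / 2 ≤ (unifSphere d {z | f z ≤ 0}).toReal := by
  obtain ⟨hc0, hctop⟩ := haus_sphere_ne d hd
  have hset : {z : EuclideanSpace ℝ (Fin d) | f z ≤ 0} = Set.univ := by
    ext z; simp [hle z]
  rw [unifSphere, hset, Measure.smul_apply, smul_eq_mul, Measure.restrict_apply_univ,
    ENNReal.inv_mul_cancel hc0 hctop]
  norm_num

lemma half_aux {d : ℕ} (hd : 1 ≤ d) (f : EuclideanSpace ℝ (Fin d) → ℝ) (hf : Continuous f)
    (a : EuclideanSpace ℝ (Fin d)) (hsub : ∀ z, 0 < f z → (0:ℝ) < inner ℝ a z) :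
    1 / 2 ≤ (unifSphere d {z | f z ≤ 0}).toReal := by
  obtain ⟨hc0, hctop⟩ := haus_sphere_ne d hd
  set c := μH[(d:ℝ)-1] (sphere (0 : EuclideanSpace ℝ (Fin d)) 1) with hc
  set μ := (μH[(d:ℝ)-1]).restrict (sphere (0 : EuclideanSpace ℝ (Fin d)) 1) with hμ
  have hμuniv : μ Set.univ = c := Measure.restrict_apply_univ _
  have hinner : Continuous (fun z : EuclideanSpace ℝ (Fin d) => (inner ℝ a z : ℝ)) :=
    continuous_const.inner continuous_id
  have hA : MeasurableSet {z : EuclideanSpace ℝ (Fin d) | (0:ℝ) < inner ℝ a z} :=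
    (isOpen_lt continuous_const hinner).measurableSet
  have hB : MeasurableSet {z : EuclideanSpace ℝ (Fin d) | (inner ℝ a z : ℝ) < 0} :=
    (isOpen_lt hinner continuous_const).measurableSet
  have hP : MeasurableSet {z : EuclideanSpace ℝ (Fin d) | 0 < f z} :=
    (isOpen_lt continuous_const hf).measurableSet
  have hdisj : Disjoint {z : EuclideanSpace ℝ (Fin d) | (0:ℝ) < inner ℝ a z}
      {z : EuclideanSpace ℝ (Fin d) | (inner ℝ a z : ℝ) < 0} := by
    rw [Set.disjoint_left]
    intro z hz1 hz2
    simp only [Set.mem_setOf_eq] at hz1 hz2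
    exact absurd (lt_trans hz1 hz2) (lt_irrefl 0)
  have hsum : μ {z : EuclideanSpace ℝ (Fin d) | (0:ℝ) < inner ℝ a z} +
      μ {z : EuclideanSpace ℝ (Fin d) | (inner ℝ a z : ℝ) < 0} ≤ c := by
    rw [← measure_union hdisj hB]
    exact le_trans (measure_mono (Set.subset_univ _)) hμuniv.le
  rw [neg_invariance a] at hsum
  have hA2 : μ {z : EuclideanSpace ℝ (Fin d) | (0:ℝ) < inner ℝ a z} ≤ c / 2 := by
    rw [ENNReal.le_div_iff_mul_le (Or.inl two_ne_zero) (Or.inl ENNReal.ofNat_ne_top), mul_two]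
    exact hsum
  have hPA : μ {z : EuclideanSpace ℝ (Fin d) | 0 < f z} ≤ c / 2 :=
    le_trans (measure_mono fun z hz => hsub z hz) hA2
  have hcompl : {z : EuclideanSpace ℝ (Fin d) | f z ≤ 0} =
      {z : EuclideanSpace ℝ (Fin d) | 0 < f z}ᶜ := by
    ext z; simp [not_lt]
  have hPfin : μ {z : EuclideanSpace ℝ (Fin d) | 0 < f z} ≠ ⊤ := by
    refine ne_top_of_le_ne_top hctop ?_
    exact le_trans (measure_mono (Set.subset_univ _)) hμuniv.le
  have hge : c / 2 ≤ μ {z : EuclideanSpace ℝ (Fin d) | f z ≤ 0} := by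
    rw [hcompl, measure_compl hP hPfin, hμuniv]
    calc c / 2 = c - c / 2 := (ENNReal.sub_half hctop).symm
      _ ≤ c - μ {z : EuclideanSpace ℝ (Fin d) | 0 < f z} := tsub_le_tsub_left hPA c
  have hfin : μ {z : EuclideanSpace ℝ (Fin d) | f z ≤ 0} ≤ c :=
    le_trans (measure_mono (Set.subset_univ _)) hμuniv.le
  have hval : (unifSphere d {z | f z ≤ 0}) = c⁻¹ * μ {z : EuclideanSpace ℝ (Fin d) | f z ≤ 0} := by
    rw [unifSphere, Measure.smul_apply, smul_eq_mul]
  have hup : c⁻¹ * μ {z : EuclideanSpace ℝ (Fin d) | f z ≤ 0} ≤ 1 := by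
    calc c⁻¹ * μ {z : EuclideanSpace ℝ (Fin d) | f z ≤ 0} ≤ c⁻¹ * c := mul_le_mul_right hfin _
      _ = 1 := ENNReal.inv_mul_cancel hc0 hctop
  have hlow : (1:ℝ≥0∞) / 2 ≤ c⁻¹ * μ {z : EuclideanSpace ℝ (Fin d) | f z ≤ 0} := by
    calc (1:ℝ≥0∞) / 2 = c⁻¹ * (c / 2) := by
          rw [← mul_div_assoc, ENNReal.inv_mul_cancel hc0 hctop]
      _ ≤ _ := mul_le_mul_right hge _
  rw [hval]
  have := ENNReal.toReal_mono (lt_of_le_of_lt hup ENNReal.one_lt_top).ne hlow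
  simpa using this

lemma relu_nonneg (z : ℝ) : 0 ≤ relu z := le_max_right z 0

lemma relu_pos_iff {z : ℝ} (h : 0 < relu z) : 0 < z := by
  by_contra hz
  push_neg at hz
  rw [relu, max_eq_right hz] at h
  exact lt_irrefl 0 h

lemma continuous_relu : Continuous relu := continuous_id.max continuous_const

lemma two_case {d : ℕ} (hd : 1 ≤ d) (v0 v1 : ℝ) (w0 w1 : EuclideanSpace ℝ (Fin d))
    (hv0 : 0 < v0) (hv1 : v1 < 0) :
    1 / 2 ≤ (unifSphere d {z | v0 * relu (inner ℝ w0 z : ℝ) + v1 * relu (inner ℝ w1 z : ℝ) ≤ 0}).toReal := by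
  apply half_aux hd _ ?_ w0
  · intro z hz
    by_contra hle
    push_neg at hle
    have h1 : relu (inner ℝ w0 z : ℝ) = 0 := by
      rw [relu, max_eq_right hle]
    have h2 : v1 * relu (inner ℝ w1 z : ℝ) ≤ 0 :=
      mul_nonpos_iff.2 (Or.inr ⟨hv1.le, relu_nonneg _⟩)
    rw [h1, mul_zero, zero_add] at hz
    exact absurd hz (not_lt.2 h2)
  · exact ((continuous_const.mul (continuous_relu.comp (continuous_const.inner continuous_id)))).add
      ((continuous_const.mul (continuous_relu.comp (continuous_const.inner continuous_id))))

/-- Catastrophic overfitting without bias (Proposition 4.4): a width-2 bias-less network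
that correctly classifies a dataset containing a negative label has clean error ≥ 1/2. -/
theorem stmt4 {d m : ℕ} (hd : 1 ≤ d)
    (v : Fin 2 → ℝ) (w : Fin 2 → EuclideanSpace ℝ (Fin d))
    (x : Fin m → EuclideanSpace ℝ (Fin d)) (y : Fin m → ℝ)
    (hy : ∀ i, y i = 1 ∨ y i = -1)
    (hfit : ∀ i, 0 < y i * netNB v w (x i))
    (hneg : ∃ i, y i = -1) :
    1 / 2 ≤ (unifSphere d {z | netNB v w z ≤ 0}).toReal := by
  obtain ⟨i0, hi0⟩ := hneg
  have hN0 : netNB v w (x i0) < 0 := by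
    have := hfit i0
    rw [hi0] at this
    linarith
  have hexpand : ∀ z, netNB v w z =
      v 0 * relu (inner ℝ (w 0) z : ℝ) + v 1 * relu (inner ℝ (w 1) z : ℝ) := fun z => by
    rw [netNB, Fin.sum_univ_two]
  by_cases hall : ∀ j, v j ≤ 0
  · apply one_aux hd
    intro z
    rw [hexpand]
    have h0 := mul_nonpos_iff.2 (Or.inr ⟨hall 0, relu_nonneg (inner ℝ (w 0) z : ℝ)⟩)
    have h1 := mul_nonpos_iff.2 (Or.inr ⟨hall 1, relu_nonneg (inner ℝ (w 1) z : ℝ)⟩)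
    linarith
  · push_neg at hall
    obtain ⟨j, hj⟩ := hall
    have hrn0 := relu_nonneg (inner ℝ (w 0) (x i0) : ℝ)
    have hrn1 := relu_nonneg (inner ℝ (w 1) (x i0) : ℝ)
    rw [hexpand] at hN0
    fin_cases j
    · have hj' : 0 < v 0 := hj
      have hv1 : v 1 < 0 := by
        by_contra h
        push_neg at h
        nlinarith [hj']
      have hset : {z | netNB v w z ≤ 0} =
          {z | v 0 * relu (inner ℝ (w 0) z : ℝ) + v 1 * relu (inner ℝ (w 1) z : ℝ) ≤ 0} := by
        ext z; rw [Set.mem_setOf_eq, Set.mem_setOf_eq, hexpand]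
      rw [hset]
      exact two_case hd (v 0) (v 1) (w 0) (w 1) hj' hv1
    · have hj' : 0 < v 1 := hj
      have hv0 : v 0 < 0 := by
        by_contra h
        push_neg at h
        nlinarith [hj']
      have hset : {z | netNB v w z ≤ 0} =
          {z | v 1 * relu (inner ℝ (w 1) z : ℝ) + v 0 * relu (inner ℝ (w 0) z : ℝ) ≤ 0} := by
        ext z
        rw [Set.mem_setOf_eq, Set.mem_setOf_eq, hexpand]
        constructor <;> intro <;> linarith
      rw [hset]
      exact two_case hd (v 1) (v 0) (w 1) (w 0) hj' hv0
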